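/- Let (F_i)_{i∈ω} be an irreducible sequence of finite rooted transitive frames. Then the map I ↦ Log({F_i : i ∈ I}) is injective on subsets of ω; consequently there is a continuum of normal modal logics extending Log({F_i}_{i∈ω}). -/

import Mathlib

/-- A Kripke frame: a set of worlds with a binary relation. -/
structure Frame where
  World : Type
  rel : World → World → Prop

/-- `f` is a reduction (surjective p-morphism) of `F` to `G`. -/
def Reduction (F G : Frame) (f : F.World → G.World) : Prop :=
  Function.Surjective f ∧
  (∀ w u, F.rel w u → G.rel (f w) (f u)) ∧
  (∀ w v, G.rel (f w) v → ∃ u, F.rel w u ∧ f u = v)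

/-- `F` is reducible to `G`. -/
def Reducible (F G : Frame) : Prop := ∃ f, Reduction F G f

/-- The subframe of `F` generated by the point `w`. -/
def Frame.genSub (F : Frame) (w : F.World) : Frame :=
  ⟨{v // Relation.ReflTransGen F.rel w v}, fun a b => F.rel a.1 b.1⟩

/-- Modal formulas over countably many propositional variables. -/
inductive Formula where
  | var : ℕ → Formula
  | bot : Formula
  | imp : Formula → Formula → Formula
  | box : Formula → Formula
deriving DecidableEq

namespace Formula

def neg (a : Formula) : Formula := .imp a .bot
def top : Formula := .imp .bot .bot
def and (a b : Formula) : Formula := neg (.imp a (neg b))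
def or (a b : Formula) : Formula := .imp (neg a) b
def dia (a : Formula) : Formula := neg (.box (neg a))

/-- Finite conjunction of a list of formulas. -/
def bigConj (l : List Formula) : Formula := l.foldr and top

/-- Finite disjunction of a list of formulas. -/
def bigDisj (l : List Formula) : Formula := l.foldr or .bot

end Formula

/-- Kripke satisfaction of a formula at a world of `F` under valuation `V`. -/
def Sat (F : Frame) (V : ℕ → F.World → Prop) : F.World → Formula → Prop
  | w, .var n => V n w
  | _, .bot => False
  | w, .imp a b => Sat F V w a → Sat F V w b
  | w, .box a => ∀ u, F.rel w u → Sat F V u a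

/-- `φ` is valid at the point `w` of `F` (true under all valuations). -/
def SatAll (F : Frame) (w : F.World) (φ : Formula) : Prop := ∀ V, Sat F V w φ

/-- `φ` is valid in the frame `F`. -/
def Valid (F : Frame) (φ : Formula) : Prop := ∀ V w, Sat F V w φ

/-- The logic of the subfamily `{F i : i ∈ I}` of a family of frames. -/
def LogOf (F : ℕ → Frame) (I : Set ℕ) : Set Formula := {φ | ∀ i ∈ I, Valid (F i) φ}


/-! ### Auxiliary development: Jankov–Fine frame formulas -/

section Aux

open Formula Classical

lemma sat_neg (F : Frame) (V : ℕ → F.World → Prop) (w : F.World) (a : Formula) :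
    Sat F V w (Formula.neg a) ↔ ¬ Sat F V w a := Iff.rfl

lemma sat_top (F : Frame) (V : ℕ → F.World → Prop) (w : F.World) :
    Sat F V w Formula.top := fun h => h

lemma sat_and (F : Frame) (V : ℕ → F.World → Prop) (w : F.World) (a b : Formula) :
    Sat F V w (Formula.and a b) ↔ Sat F V w a ∧ Sat F V w b := by
  simp only [Formula.and, Formula.neg, Sat]
  tauto

lemma sat_or (F : Frame) (V : ℕ → F.World → Prop) (w : F.World) (a b : Formula) :
    Sat F V w (Formula.or a b) ↔ Sat F V w a ∨ Sat F V w b := by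
  simp only [Formula.or, Formula.neg, Sat]
  tauto

lemma sat_dia (F : Frame) (V : ℕ → F.World → Prop) (w : F.World) (a : Formula) :
    Sat F V w (Formula.dia a) ↔ ∃ u, F.rel w u ∧ Sat F V u a := by
  simp only [Formula.dia, Formula.neg, Sat]
  constructor
  · intro h
    by_contra hc
    push_neg at hc
    exact h fun u hu ha => hc u hu ha
  · rintro ⟨u, hu, ha⟩ h
    exact h u hu ha

lemma sat_bigConj (F : Frame) (V : ℕ → F.World → Prop) (w : F.World) (l : List Formula) :
    Sat F V w (Formula.bigConj l) ↔ ∀ φ ∈ l, Sat F V w φ := by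
  induction l with
  | nil => simpa [Formula.bigConj] using sat_top F V w
  | cons a l ih =>
    simp only [Formula.bigConj, List.foldr_cons] at *
    rw [sat_and, ih]
    simp

lemma sat_bigDisj (F : Frame) (V : ℕ → F.World → Prop) (w : F.World) (l : List Formula) :
    Sat F V w (Formula.bigDisj l) ↔ ∃ φ ∈ l, Sat F V w φ := by
  induction l with
  | nil => simp [Formula.bigDisj, Sat]
  | cons a l ih =>
    simp only [Formula.bigDisj, List.foldr_cons] at *
    rw [sat_or, ih]
    simp

variable (G : Frame) [Fintype G.World]

/-- The variable index of a world. -/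
noncomputable def enc (w : G.World) : ℕ := ((Fintype.equivFin G.World) w : ℕ)

lemma enc_inj : Function.Injective (enc G) := by
  intro a b h
  exact (Fintype.equivFin G.World).injective (Fin.val_injective h)

/-- The propositional variable associated to a world. -/
noncomputable def pv (w : G.World) : Formula := .var (enc G w)

/-- Disjunction of all world-variables. -/
noncomputable def disjF : Formula :=
  Formula.bigDisj ((Finset.univ : Finset G.World).toList.map (pv G))

/-- Uniqueness clause for a pair of worlds. -/
noncomputable def clA (p : G.World × G.World) : Formula :=
  if p.1 = p.2 then Formula.top else .imp (pv G p.1) (Formula.neg (pv G p.2))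

/-- Relational clause for a pair of worlds. -/
noncomputable def clB (p : G.World × G.World) : Formula :=
  if G.rel p.1 p.2 then .imp (pv G p.1) (Formula.dia (pv G p.2))
  else .imp (pv G p.1) (Formula.neg (Formula.dia (pv G p.2)))

noncomputable def clauses : List Formula :=
  ((Finset.univ : Finset (G.World × G.World)).toList.map (clA G)) ++
  ((Finset.univ : Finset (G.World × G.World)).toList.map (clB G))

noncomputable def bodyF : Formula := Formula.and (disjF G) (Formula.bigConj (clauses G))

/-- The Jankov–Fine "description" formula of `G` with root `r`. -/
noncomputable def deltaF (r : G.World) : Formula :=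
  Formula.and (pv G r) (Formula.and (bodyF G) (.box (bodyF G)))

lemma clA_mem (w v : G.World) : clA G (w, v) ∈ clauses G := by
  apply List.mem_append_left
  exact List.mem_map_of_mem (by simp)

lemma clB_mem (w v : G.World) : clB G (w, v) ∈ clauses G := by
  apply List.mem_append_right
  exact List.mem_map_of_mem (by simp)

/-- The frame formula `¬ δ` fails in `G` itself. -/
lemma delta_fails (r : G.World) : ¬ Valid G (Formula.neg (deltaF G r)) := by
  intro h
  set V : ℕ → G.World → Prop := fun n w => enc G w = n with hV
  apply h V r
  have hcl : ∀ u : G.World, Sat G V u (bodyF G) := by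
    intro u
    rw [bodyF, sat_and]
    constructor
    · rw [disjF, sat_bigDisj]
      exact ⟨pv G u, List.mem_map_of_mem (by simp), rfl⟩
    · rw [sat_bigConj]
      intro φ hφ
      rcases List.mem_append.1 hφ with hφ | hφ
      · rcases List.mem_map.1 hφ with ⟨⟨a, b⟩, _, rfl⟩
        by_cases hab : a = b
        · rw [clA, if_pos hab]; exact sat_top G V u
        · rw [clA, if_neg hab]
          intro ha hb
          exact hab (enc_inj G ((ha : enc G u = enc G a) ▸ (hb : enc G u = enc G b)))
      · rcases List.mem_map.1 hφ with ⟨⟨a, b⟩, _, rfl⟩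
        by_cases hab : G.rel a b
        · rw [clB, if_pos hab]
          intro ha
          rw [Formula.dia, sat_neg, Sat]
          push_neg
          refine ⟨b, ?_, fun hc => hc rfl⟩
          have : u = a := enc_inj G (ha : enc G u = enc G a)
          rwa [this]
        · rw [clB, if_neg hab]
          intro ha hd
          rw [Formula.dia, sat_neg, Sat] at hd
          push_neg at hd
          obtain ⟨z, hz, hzb⟩ := hd
          rw [sat_neg] at hzb
          have hb : Sat G V z (pv G b) := by_contra fun hc => hzb hc
          have hu : u = a := enc_inj G ha
          have hz' : z = b := enc_inj G hb
          exact hab (hu ▸ hz' ▸ hz)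
  rw [deltaF, sat_and, sat_and]
  exact ⟨rfl, hcl r, fun u _ => hcl u⟩

/-- Characterization of reflexive-transitive closure for a transitive relation. -/
lemma rtg_of_trans {α : Type} {r : α → α → Prop}
    (htr : ∀ a b c, r a b → r b c → r a c) {w v : α}
    (h : Relation.ReflTransGen r w v) : v = w ∨ r w v := by
  induction h with
  | refl => exact Or.inl rfl
  | tail h1 h2 ih =>
    rcases ih with rfl | ih
    · exact Or.inr h2
    · exact Or.inr (htr _ _ _ ih h2)

/-- If no point-generated subframe of `H` reduces to `G`, then the frame formula
of `G` is valid in `H`. -/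
lemma delta_valid (H : Frame) (r : G.World)
    (hroot : ∀ u, u = r ∨ G.rel r u)
    (htrH : ∀ a b c, H.rel a b → H.rel b c → H.rel a c)
    (hnred : ∀ w : H.World, ¬ Reducible (H.genSub w) G) :
    Valid H (Formula.neg (deltaF G r)) := by
  intro V w hsat
  rw [deltaF, sat_and, sat_and] at hsat
  obtain ⟨hr, hbw, hbox⟩ := hsat
  set S := H.genSub w with hS
  have hbody : ∀ y : S.World, Sat H V y.1 (bodyF G) := by
    rintro ⟨y, hy⟩
    rcases rtg_of_trans htrH hy with rfl | hy'
    · exact hbw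
    · exact hbox y hy'
  have hlabel : ∀ y : S.World, ∃ a : G.World, V (enc G a) y.1 := by
    intro y
    have := (sat_and _ _ _ _ _).1 (hbody y) |>.1
    rw [disjF, sat_bigDisj] at this
    obtain ⟨φ, hφ, hsφ⟩ := this
    rcases List.mem_map.1 hφ with ⟨a, _, rfl⟩
    exact ⟨a, hsφ⟩
  have hclause : ∀ (y : S.World) (φ : Formula), φ ∈ clauses G → Sat H V y.1 φ := by
    intro y φ hφ
    have := (sat_and _ _ _ _ _).1 (hbody y) |>.2
    rw [sat_bigConj] at this
    exact this φ hφ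
  have huniq : ∀ (y : S.World) (a b : G.World),
      V (enc G a) y.1 → V (enc G b) y.1 → a = b := by
    intro y a b ha hb
    by_contra hab
    have hc := hclause y (clA G (a, b)) (clA_mem G a b)
    rw [clA, if_neg hab] at hc
    exact hc ha hb
  classical
  set f : S.World → G.World := fun y => Classical.choose (hlabel y) with hf
  have hfspec : ∀ y : S.World, V (enc G (f y)) y.1 := fun y => Classical.choose_spec (hlabel y)
  have hback : ∀ (y : S.World) (v : G.World), G.rel (f y) v →
      ∃ u : S.World, S.rel y u ∧ f u = v := by
    intro y v hrel
    have hc := hclause y (clB G (f y, v)) (clB_mem G (f y) v)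
    rw [clB, if_pos hrel] at hc
    have hd := hc (hfspec y)
    rw [sat_dia] at hd
    obtain ⟨u, hu, hsu⟩ := hd
    have humem : Relation.ReflTransGen H.rel w u := y.2.tail hu
    refine ⟨⟨u, humem⟩, hu, ?_⟩
    exact huniq ⟨u, humem⟩ _ _ (hfspec ⟨u, humem⟩) hsu
  have hwroot : f ⟨w, Relation.ReflTransGen.refl⟩ = r :=
    huniq _ _ _ (hfspec _) hr
  apply hnred w
  refine ⟨f, ?_, ?_, hback⟩
  · -- surjective
    intro v
    rcases hroot v with rfl | hv
    · exact ⟨⟨w, Relation.ReflTransGen.refl⟩, hwroot⟩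
    · obtain ⟨u, _, hu⟩ := hback ⟨w, Relation.ReflTransGen.refl⟩ v (hwroot ▸ hv)
      exact ⟨u, hu⟩
  · -- forth
    intro y z hyz
    by_contra hab
    have hc := hclause y (clB G (f y, f z)) (clB_mem G (f y) (f z))
    rw [clB, if_neg hab] at hc
    have := hc (hfspec y)
    rw [sat_neg, sat_dia] at this
    exact this ⟨z.1, hyz, hfspec z⟩

end Aux

/-- If `(F i)` is an irreducible sequence of finite rooted transitive frames,
then `I ↦ Log({F i : i ∈ I})` is injective on subsets of `ω`, and consequently
there is a continuum of logics of subfamilies, all extending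
`Log({F i : i ∈ ω})`. -/
theorem irreducible_seq_continuum (F : ℕ → Frame)
    (hfin : ∀ i, Finite (F i).World)
    (htr : ∀ i, ∀ a b c, (F i).rel a b → (F i).rel b c → (F i).rel a c)
    (hroot : ∀ i, ∃ w : (F i).World, ∀ u, u = w ∨ (F i).rel w u)
    (hirr : ∀ i j : ℕ, i ≠ j → ∀ w : (F j).World, ¬ Reducible ((F j).genSub w) (F i)) :
    Function.Injective (fun I : Set ℕ => LogOf F I) ∧
    Cardinal.continuum ≤
      Cardinal.mk {L : Set Formula // LogOf F Set.univ ⊆ L ∧ ∃ I : Set ℕ, L = LogOf F I} := by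
  classical
  letI : ∀ i, Fintype (F i).World := fun i => Fintype.ofFinite _
  choose root hrootspec using hroot
  set χ : ℕ → Formula := fun i => Formula.neg (deltaF (F i) (root i)) with hχ
  have keyA : ∀ i, ¬ Valid (F i) (χ i) := fun i => delta_fails (F i) (root i)
  have keyB : ∀ i j, i ≠ j → Valid (F j) (χ i) := fun i j hij =>
    delta_valid (F i) (F j) (root i) (hrootspec i) (htr j) (fun w => hirr i j hij w)
  have main : ∀ I J : Set ℕ, LogOf F I = LogOf F J → ∀ i, i ∈ I → i ∈ J := by
    intro I J h i hi
    by_contra hni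
    have hχJ : χ i ∈ LogOf F J := fun j hj => keyB i j (fun e => hni (e ▸ hj))
    rw [← h] at hχJ
    exact keyA i (hχJ i hi)
  have hinj : Function.Injective (fun I : Set ℕ => LogOf F I) := by
    intro I J h
    exact Set.ext fun i => ⟨main I J h i, main J I h.symm i⟩
  refine ⟨hinj, ?_⟩
  have hsub : ∀ I : Set ℕ, LogOf F Set.univ ⊆ LogOf F I :=
    fun I φ hφ i _ => hφ i (Set.mem_univ i)
  have hinj2 : Function.Injective
      (fun I : Set ℕ => (⟨LogOf F I, hsub I, I, rfl⟩ :
        {L : Set Formula // LogOf F Set.univ ⊆ L ∧ ∃ I : Set ℕ, L = LogOf F I})) := by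
    intro I J h
    exact hinj (congrArg Subtype.val h)
  calc Cardinal.continuum = Cardinal.mk (Set ℕ) := by
        rw [Cardinal.mk_set, Cardinal.mk_nat, Cardinal.two_power_aleph0]
    _ ≤ _ := Cardinal.mk_le_of_injective hinj2
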